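/- Let 0→h→ĝ→g→0 be an abelian extension of Lie triple systems with section s, 3-cocycle ω, and representation (h,θ) of g with θ(x,y)a=[a,s(x),s(y)]. A pair (α,β)∈Aut(g)×Aut(h) is inducible if and only if there exists a linear map φ: g→h such that β(θ(x,y)a) = θ(α(x),α(y))β(a) and βω(x,y,z) − ω(α(x),α(y),α(z)) = θ(α(x),α(z))φ(y) − θ(α(y),α(z))φ(x) − D_θ(α(x),α(y))φ(z) + φ([x,y,z]_g) for all x,y,z ∈ g and a ∈ h. -/
import Mathlib


universe u v w

/-- A Lie triple system over a field `k`. -/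
structure LTS (k : Type u) (V : Type v) [Field k] [AddCommGroup V] [Module k V] where
  t : V →ₗ[k] V →ₗ[k] V →ₗ[k] V
  alt : ∀ x y, t x x y = 0
  cyc : ∀ x y z, t x y z + t y z x + t z x y = 0
  leib : ∀ a b x y z, t a b (t x y z) =
    t (t a b x) y z + t x (t a b y) z + t x y (t a b z)

/-- `D_θ(x,y) a = θ(y,x) a - θ(x,y) a`. -/
def Dmap {G H : Type*} [AddCommGroup H] (θ : G → G → H → H) (x y : G) (a : H) : H :=
  θ y x a - θ x y a

/-- `D_ρ(x)(a,b) = ρ(x)(b,a) - ρ(x)(a,b)`. -/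
def Drho {G H : Type*} [AddCommGroup H] (ρ : G → H → H → H) (x : G) (a b : H) : H :=
  ρ x b a - ρ x a b

/-- A non-abelian 3-cocycle on `g` with values in `h`: identities (3.2)–(3.14) of the paper,
together with the wedge conditions on `ω`, `θ`, `ρ`. -/
def IsNACocycle {G H : Type*} [AddCommGroup H]
    (tg : G → G → G → G) (th : H → H → H → H)
    (ω : G → G → G → H) (θ : G → G → H → H) (ρ : G → H → H → H) : Prop :=
  (∀ x y, ω x x y = 0) ∧
  (∀ x a, θ x x a = 0) ∧
  (∀ x a, ρ x a a = 0) ∧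
  (∀ x y z, ω x y z + ω y z x + ω z x y = 0) ∧
  (∀ x1 x2 y1 y2 y3,
    Dmap θ x1 x2 (ω y1 y2 y3) + ω x1 x2 (tg y1 y2 y3) =
      ω (tg x1 x2 y1) y2 y3 + θ y2 y3 (ω x1 x2 y1)
      + ω y1 (tg x1 x2 y2) y3 - θ y1 y3 (ω x1 x2 y2)
      + ω y1 y2 (tg x1 x2 y3) + Dmap θ y1 y2 (ω x1 x2 y3)) ∧
  (∀ x y z w a,
    Dmap θ x y (θ z w a) - θ z w (Dmap θ x y a) =
      θ (tg x y z) w a + θ z (tg x y w) a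
      - Drho ρ w (ω x y z) a - ρ z a (ω x y w)) ∧
  (∀ x y z w a,
    θ x (tg y z w) a - ρ x a (ω y z w) =
      θ z w (θ x y a) - θ y w (θ x z a) + Dmap θ y z (θ x w a)) ∧
  (∀ x y z a b,
    Dmap θ x y (ρ z a b) =
      ρ z (Dmap θ x y a) b + ρ (tg x y z) a b + th (ω x y z) a b
      + ρ z a (Dmap θ x y b)) ∧
  (∀ x y z a b,
    Dmap θ y z (ρ x a b) =
      ρ x a (Dmap θ y z b) - ρ z (θ x y a) b + ρ y (θ x z a) b) ∧
  (∀ x y z a b,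
    θ y z (ρ x a b) =
      ρ x a (θ y z b) - Drho ρ z (θ x y a) b - ρ y b (θ x z a)) ∧
  (∀ x y a b c,
    Dmap θ x y (th a b c) =
      th (Dmap θ x y a) b c + th a (Dmap θ x y b) c + th a b (Dmap θ x y c)) ∧
  (∀ x y a b c,
    ρ x a (ρ y b c) =
      ρ y (ρ x a b) c + ρ y b (ρ x a c) - th (θ x y a) b c) ∧
  (∀ x y a b c,
    th a b (θ x y c) =
      θ x y (th a b c) - Drho ρ y (Drho ρ x a b) c - ρ x c (Drho ρ y a b)) ∧
  (∀ x a b c d,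
    th a b (ρ x c d) =
      ρ x (th a b c) d - th c (Drho ρ x a b) d + ρ x c (th a b d)) ∧
  (∀ x a b c d,
    ρ x a (th b c d) =
      th (ρ x a b) c d + th b (ρ x a c) d + th b c (ρ x a d))

/-- The bracket `[x+a, y+b, z+c]_{(ω,θ,ρ)}` on `g ⊕ h`. -/
def nabBr {G H : Type*} [AddCommGroup H]
    (tg : G → G → G → G) (th : H → H → H → H)
    (ω : G → G → G → H) (θ : G → G → H → H) (ρ : G → H → H → H) :
    G × H → G × H → G × H → G × H :=
  fun p q r =>
    (tg p.1 q.1 r.1,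
      ω p.1 q.1 r.1 + Dmap θ p.1 q.1 r.2 + θ q.1 r.1 p.2 - θ p.1 r.1 q.2
        + Drho ρ r.1 p.2 q.2 + ρ p.1 q.2 r.2 - ρ q.1 p.2 r.2 + th p.2 q.2 r.2)

/-- Equivalence of two non-abelian 3-cocycles via `φ : g → h`
(equations (3.15)–(3.17) of the paper). -/
def CocycleEquiv {G H : Type*} [AddCommGroup H]
    (tg : G → G → G → G) (th : H → H → H → H)
    (ω1 : G → G → G → H) (θ1 : G → G → H → H) (ρ1 : G → H → H → H)
    (ω2 : G → G → G → H) (θ2 : G → G → H → H) (ρ2 : G → H → H → H)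
    (φ : G → H) : Prop :=
  (∀ x y z,
    ω1 x y z - ω2 x y z =
      θ2 x z (φ y) - Dmap θ2 x y (φ z) + ρ2 x (φ y) (φ z) - θ2 y z (φ x)
        + Drho ρ2 z (φ x) (φ y) - ρ2 y (φ x) (φ z)
        - th (φ x) (φ y) (φ z) + φ (tg x y z)) ∧
  (∀ x y a,
    θ1 x y a - θ2 x y a =
      ρ2 x a (φ y) - Drho ρ2 y a (φ x) + th a (φ x) (φ y)) ∧
  (∀ x a b, ρ1 x a b - ρ2 x a b = th a (φ x) b)

/-- The operation `i_f(g)` on degree-one cochains (from equations (4.2)–(4.4)). -/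
def ibrack {M : Type*} [AddCommGroup M] (f g : M → M → M → M) :
    M → M → M → M → M → M :=
  fun x1 y1 x2 y2 z =>
    f (g x1 y1 x2) y2 z + f x2 (g x1 y1 y2) z
      - (f x1 y1 (g x2 y2 z) - f x2 y2 (g x1 y1 z))

/-- The graded bracket `[f,g]_{Lts} = (-1)^{1·1} i_f(g) - i_g(f)` of two degree-one cochains. -/
def brLts {M : Type*} [AddCommGroup M] (f g : M → M → M → M) :
    M → M → M → M → M → M :=
  fun x1 y1 x2 y2 z =>
    -(ibrack f g x1 y1 x2 y2 z) - ibrack g f x1 y1 x2 y2 z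

/-- Non-abelian 1-cocycles on `g` with values in `h`. -/
def IsZ1 {G H : Type*} [AddCommGroup H]
    (tg : G → G → G → G) (th : H → H → H → H)
    (θ : G → G → H → H) (ρ : G → H → H → H) (φ : G → H) : Prop :=
  (∀ x a b, th a (φ x) b = 0) ∧
  (∀ x y a, th a (φ x) (φ y) - Drho ρ y a (φ x) + ρ x a (φ y) = 0) ∧
  (∀ x y z,
    Drho ρ z (φ x) (φ y) - ρ y (φ x) (φ z) - θ y z (φ x)
      + ρ x (φ y) (φ z) + θ x z (φ y) - Dmap θ x y (φ z)
      = th (φ x) (φ y) (φ z) - φ (tg x y z))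

/-- for an abelian extension `0 → h → ĝ → g → 0` with section `s`, 3-cocycle
`ω` and representation `(h,θ)` (with `θ(x,y)a = [a, s x, s y]`), a pair
`(α,β) ∈ Aut(g) × Aut(h)` is inducible if and only if there is a linear `φ : g → h` with
`β(θ(x,y)a) = θ(αx,αy)(βa)` and
`βω(x,y,z) − ω(αx,αy,αz) = θ(αx,αz)φ(y) − θ(αy,αz)φ(x) − D_θ(αx,αy)φ(z) + φ([x,y,z]_g)`. -/
theorem statement19 {k G H E : Type*} [Field k] [AddCommGroup G] [Module k G]
    [AddCommGroup H] [Module k H] [AddCommGroup E] [Module k E]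
    (Lg : LTS k G) (Lh : LTS k H) (LE : LTS k E)
    (i : H →ₗ[k] E) (p : E →ₗ[k] G)
    (ihom : ∀ a b c, i (Lh.t a b c) = LE.t (i a) (i b) (i c))
    (phom : ∀ x y z, p (LE.t x y z) = Lg.t (p x) (p y) (p z))
    (iinj : Function.Injective i) (psurj : Function.Surjective p)
    (hexact : LinearMap.range i = LinearMap.ker p)
    -- `h` is an abelian ideal of `ĝ`
    (hab1 : ∀ (a b : H) (e : E), LE.t (i a) (i b) e = 0)
    (hab2 : ∀ (e : E) (a b : H), LE.t e (i a) (i b) = 0)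
    (s : G →ₗ[k] E) (hs : ∀ x, p (s x) = x)
    (ω : G → G → G → H) (θ : G → G → H → H)
    (hω : ∀ x y z, i (ω x y z) = LE.t (s x) (s y) (s z) - s (Lg.t x y z))
    (hθ : ∀ x y a, i (θ x y a) = LE.t (i a) (s x) (s y))
    (α : G ≃ₗ[k] G) (β : H ≃ₗ[k] H)
    (αhom : ∀ x y z, α (Lg.t x y z) = Lg.t (α x) (α y) (α z))
    (βhom : ∀ a b c, β (Lh.t a b c) = Lh.t (β a) (β b) (β c)) :
    (∃ γ : E ≃ₗ[k] E,
      (∀ x y z, γ (LE.t x y z) = LE.t (γ x) (γ y) (γ z)) ∧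
      (∀ a, γ (i a) = i (β a)) ∧
      (∀ x, p (γ (s x)) = α x)) ↔
    (∃ φ : G →ₗ[k] H,
      (∀ x y a, β (θ x y a) = θ (α x) (α y) (β a)) ∧
      (∀ x y z,
        β (ω x y z) - ω (α x) (α y) (α z) =
          θ (α x) (α z) (φ y) - θ (α y) (α z) (φ x)
            - Dmap θ (α x) (α y) (φ z) + φ (Lg.t x y z))) := by
  classical
  -- skew-symmetry in the first two arguments
  have skew : ∀ u v w : E, LE.t v u w = - LE.t u v w := by
    intro u v w
    have h := LE.alt (u + v) w
    simp only [map_add, LinearMap.add_apply, LE.alt, zero_add, add_zero] at h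
    exact eq_neg_of_add_eq_zero_left h
  have z1 : ∀ (a b : H) (e : E), LE.t (i a) (i b) e = 0 := hab1
  have z2 : ∀ (e : E) (a b : H), LE.t e (i a) (i b) = 0 := hab2
  have z3 : ∀ (a : H) (e : E) (b : H), LE.t (i a) e (i b) = 0 := by
    intro a e b
    rw [skew, z2, neg_zero]
  -- third-slot formula
  have tthird : ∀ (x y : G) (c : H),
      LE.t (s x) (s y) (i c) = i (Dmap θ x y c) := by
    intro x y c
    have h := LE.cyc (s x) (s y) (i c)
    have h2 : LE.t (s y) (i c) (s x) = - i (θ y x c) := by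
      rw [skew, hθ]
    have h3 : LE.t (i c) (s x) (s y) = i (θ x y c) := (hθ x y c).symm
    rw [h2, h3] at h
    have : LE.t (s x) (s y) (i c) = i (θ y x c) - i (θ x y c) := by
      have := eq_neg_of_add_eq_zero_left (by linear_combination (norm := abel) h :
        LE.t (s x) (s y) (i c) + (- i (θ y x c) + i (θ x y c)) = 0)
      rw [this]; abel
    rw [this, Dmap, map_sub]
  -- linearity facts for θ
  have θsub : ∀ (x y : G) (a b : H), θ x y (a - b) = θ x y a - θ x y b := by
    intro x y a b
    apply iinj
    simp only [map_sub, hθ, LinearMap.sub_apply, LinearMap.map_sub]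
  have θzero : ∀ (x y : G), θ x y 0 = 0 := by
    intro x y
    apply iinj
    simp only [hθ, map_zero, LinearMap.zero_apply, LinearMap.map_zero]
  have θneg : ∀ (x y : G) (a : H), θ x y (-a) = - θ x y a := by
    intro x y a
    have := θsub x y 0 a
    rw [θzero, zero_sub, zero_sub] at this
    exact this
  have Dneg : ∀ (x y : G) (a : H), Dmap θ x y (-a) = - Dmap θ x y a := by
    intro x y a
    simp only [Dmap, θneg]; abel
  have Dsub : ∀ (x y : G) (a b : H),
      Dmap θ x y (a - b) = Dmap θ x y a - Dmap θ x y b := by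
    intro x y a b
    simp only [Dmap, θsub]; abel
  -- expansion of the bracket of split elements
  have texp : ∀ (x y z : G) (a b c : H),
      LE.t (s x + i a) (s y + i b) (s z + i c)
        = s (Lg.t x y z)
          + i (ω x y z + θ y z a - θ x z b + Dmap θ x y c) := by
    intro x y z a b c
    have e1 : LE.t (s x) (s y) (s z) = i (ω x y z) + s (Lg.t x y z) := by
      rw [hω]; abel
    have e2 : LE.t (i a) (s y) (s z) = i (θ y z a) := (hθ y z a).symm
    have e3 : LE.t (s x) (i b) (s z) = - i (θ x z b) := by
      rw [skew, hθ]
    have e4 := tthird x y c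
    simp only [map_add, LinearMap.add_apply]
    rw [e1, e2, e3, e4, z1, z2, z3, z1]
    simp only [map_add, map_sub]
    abel
  -- the retraction q : E → H with i (q e) = e - s (p e)
  have hmem : ∀ e : E, e - s (p e) ∈ LinearMap.range i := by
    intro e
    rw [hexact, LinearMap.mem_ker, map_sub, hs]
    abel
  obtain ⟨Q, hQ⟩ : ∃ Q : E →ₗ[k] H, ∀ e, i (Q e) = e - s (p e) := by
    refine ⟨(LinearEquiv.ofInjective i iinj).symm.toLinearMap ∘ₗ
      ((LinearMap.id - s ∘ₗ p).codRestrict (LinearMap.range i)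
        (fun e => hmem e)), fun e => ?_⟩
    have key : ∀ y : LinearMap.range i,
        i ((LinearEquiv.ofInjective i iinj).symm y) = (y : E) := by
      intro y
      conv_rhs => rw [← (LinearEquiv.ofInjective i iinj).apply_symm_apply y]
      rw [LinearEquiv.ofInjective_apply]
    exact key _
  have pi0 : ∀ a : H, p (i a) = 0 := by
    intro a
    have : i a ∈ LinearMap.ker p := by rw [← hexact]; exact ⟨a, rfl⟩
    exact this
  have Qs : ∀ x : G, Q (s x) = 0 := by
    intro x
    apply iinj
    rw [hQ, hs, map_zero, sub_self]
  have Qi : ∀ a : H, Q (i a) = a := by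
    intro a
    apply iinj
    rw [hQ, pi0, map_zero, sub_zero]
  have edec : ∀ e : E, e = s (p e) + i (Q e) := by
    intro e
    rw [hQ]; abel
  constructor
  · rintro ⟨γ, γhom, γi, γp⟩
    set ψ : G → H := fun w => Q (γ (s w) - s (α w)) with hψdef
    have hψ : ∀ w : G, γ (s w) = s (α w) + i (ψ w) := by
      intro w
      have hp : p (γ (s w) - s (α w)) = 0 := by
        rw [map_sub, γp, hs, sub_self]
      rw [hψdef]
      simp only []
      rw [hQ, hp, map_zero, sub_zero]
      abel
    refine ⟨- (Q ∘ₗ (((γ : E →ₗ[k] E) ∘ₗ s) - (s ∘ₗ α.toLinearMap))), ?_, ?_⟩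
    · intro x y a
      apply iinj
      have L : i (β (θ x y a)) = γ (i (θ x y a)) := (γi _).symm
      rw [L, hθ, γhom, γi, hψ, hψ, hθ]
      simp only [map_add, LinearMap.add_apply, z1, z3, add_zero]
    · intro x y z
      have φapp : ∀ w : G,
          (- (Q ∘ₗ (((γ : E →ₗ[k] E) ∘ₗ s) - (s ∘ₗ α.toLinearMap)))) w
            = -(ψ w) := by
        intro w
        simp only [LinearMap.neg_apply, LinearMap.coe_comp, Function.comp_apply,
          LinearMap.sub_apply, LinearEquiv.coe_coe, hψdef, map_sub]
      have main : β (ω x y z)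
          = ω (α x) (α y) (α z) + θ (α y) (α z) (ψ x) - θ (α x) (α z) (ψ y)
            + Dmap θ (α x) (α y) (ψ z) - ψ (Lg.t x y z) := by
        apply iinj
        have L : i (β (ω x y z)) = γ (i (ω x y z)) := (γi _).symm
        rw [L, hω, map_sub, γhom, hψ, hψ, hψ, texp, hψ, αhom]
        simp only [map_add, map_sub]
        abel
      rw [φapp, φapp, φapp, φapp, θneg, θneg, Dneg, main]
      abel
  · rintro ⟨φ, hβθ, hωeq⟩
    -- construct γ
    let g1 : E →ₗ[k] E :=
      (s ∘ₗ (α.toLinearMap ∘ₗ p)) - (i ∘ₗ (φ ∘ₗ p)) + (i ∘ₗ (β.toLinearMap ∘ₗ Q))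
    let g2 : E →ₗ[k] E :=
      (s ∘ₗ (α.symm.toLinearMap ∘ₗ p))
        + (i ∘ₗ (β.symm.toLinearMap ∘ₗ (φ ∘ₗ (α.symm.toLinearMap ∘ₗ p))))
        + (i ∘ₗ (β.symm.toLinearMap ∘ₗ Q))
    have g1s : ∀ x : G, g1 (s x) = s (α x) - i (φ x) := by
      intro x
      simp only [g1, LinearMap.add_apply, LinearMap.sub_apply, LinearMap.coe_comp,
        Function.comp_apply, LinearEquiv.coe_coe, hs, Qs, map_zero, add_zero]
    have g1i : ∀ a : H, g1 (i a) = i (β a) := by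
      intro a
      simp only [g1, LinearMap.add_apply, LinearMap.sub_apply, LinearMap.coe_comp,
        Function.comp_apply, LinearEquiv.coe_coe, pi0, Qi, map_zero, sub_zero,
        zero_add]
    have g2s : ∀ x : G, g2 (s x) = s (α.symm x) + i (β.symm (φ (α.symm x))) := by
      intro x
      simp only [g2, LinearMap.add_apply, LinearMap.coe_comp, Function.comp_apply,
        LinearEquiv.coe_coe, hs, Qs, map_zero, add_zero]
    have g2i : ∀ a : H, g2 (i a) = i (β.symm a) := by
      intro a
      simp only [g2, LinearMap.add_apply, LinearMap.coe_comp, Function.comp_apply,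
        LinearEquiv.coe_coe, pi0, Qi, map_zero, add_zero, zero_add]
    have key1 : ∀ (x : G) (a : H), g1 (g2 (s x + i a)) = s x + i a := by
      intro x a
      rw [map_add, g2s, g2i, map_add, map_add, g1s, g1i, g1i]
      simp only [LinearEquiv.apply_symm_apply]
      abel
    have key2 : ∀ (x : G) (a : H), g2 (g1 (s x + i a)) = s x + i a := by
      intro x a
      rw [map_add, g1s, g1i, map_add, map_sub, g2s, g2i, g2i]
      simp only [LinearEquiv.symm_apply_apply]
      abel
    have inv1 : ∀ e : E, g1 (g2 e) = e := by
      intro e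
      conv_lhs => rw [edec e]
      rw [key1]
      exact (edec e).symm
    have inv2 : ∀ e : E, g2 (g1 e) = e := by
      intro e
      conv_lhs => rw [edec e]
      rw [key2]
      exact (edec e).symm
    refine ⟨LinearEquiv.ofLinear g1 g2 (LinearMap.ext inv1) (LinearMap.ext inv2),
      ?_, ?_, ?_⟩
    · intro e1 e2 e3
      simp only [LinearEquiv.ofLinear_apply]
      have key : ∀ (x1 x2 x3 : G) (a1 a2 a3 : H),
          g1 (LE.t (s x1 + i a1) (s x2 + i a2) (s x3 + i a3))
            = LE.t (g1 (s x1 + i a1)) (g1 (s x2 + i a2)) (g1 (s x3 + i a3)) := by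
        intro x1 x2 x3 a1 a2 a3
        have g1sum : ∀ (x : G) (a : H), g1 (s x + i a) = s (α x) + i (β a - φ x) := by
          intro x a
          rw [map_add, g1s, g1i, map_sub]
          abel
        rw [texp, g1sum, g1sum, g1sum, g1sum, texp, αhom]
        congr 1
        apply congrArg
        have hω' : β (ω x1 x2 x3)
            = ω (α x1) (α x2) (α x3) + (θ (α x1) (α x3) (φ x2)
              - θ (α x2) (α x3) (φ x1) - Dmap θ (α x1) (α x2) (φ x3)
              + φ (Lg.t x1 x2 x3)) := by
          have h := hωeq x1 x2 x3
          linear_combination (norm := abel) h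
        simp only [map_add, map_sub, hβθ, θsub, Dsub, Dmap, hω']
        abel
      rw [edec e1, edec e2, edec e3]
      exact key (p e1) (p e2) (p e3) (Q e1) (Q e2) (Q e3)
    · intro a
      simp only [LinearEquiv.ofLinear_apply]
      exact g1i a
    · intro x
      simp only [LinearEquiv.ofLinear_apply]
      rw [g1s, map_sub, hs, pi0, sub_zero]
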